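/- Let f be an injective holomorphic function on an open set D ⊆ ℂ and K ⊆ D a measurable set. Then the Lebesgue area of f(K) equals ∫_K |f'(z)|² dA(z). -/

import Mathlib

open Complex MeasureTheory

lemma det_mul_map (c : ℂ) :
    LinearMap.det ((LinearMap.mul ℝ ℂ c).restrictScalars ℝ) = Complex.normSq c := by
  rw [← LinearMap.det_toMatrix Complex.basisOneI, Matrix.det_fin_two]
  simp [LinearMap.toMatrix_apply, Complex.coe_basisOneI_repr, Complex.normSq_apply,
    Complex.coe_basisOneI, mul_comm]

/-- Area theorem: if `f` is injective and holomorphic on an open set `D ⊆ ℂ` and `K ⊆ D`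
is measurable, then the Lebesgue area of `f(K)` equals `∫_K |f'(z)|² dA(z)`. -/
theorem area_image_of_injective_holomorphic (D : Set ℂ) (hD : IsOpen D) (f : ℂ → ℂ)
    (hf : DifferentiableOn ℂ f D) (hinj : Set.InjOn f D)
    (K : Set ℂ) (hK : MeasurableSet K) (hKD : K ⊆ D) :
    volume (f '' K) = ∫⁻ z in K, ENNReal.ofReal (‖deriv f z‖ ^ 2) := by
  have hderiv : ∀ z ∈ K, HasFDerivWithinAt f
      (((deriv f z) • (1 : ℂ →L[ℂ] ℂ)).restrictScalars ℝ) K z := by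
    intro z hz
    have := (hf.differentiableAt (hD.mem_nhds (hKD hz))).hasDerivAt
    have h2 : (1 : ℂ →L[ℂ] ℂ).smulRight (deriv f z) = (deriv f z) • (1 : ℂ →L[ℂ] ℂ) := by
      ext; simp [mul_comm]
    exact h2 ▸ ((this.hasFDerivAt.restrictScalars ℝ).hasFDerivWithinAt)
  rw [← lintegral_abs_det_fderiv_eq_addHaar_image volume hK hderiv (hinj.mono hKD)]
  refine lintegral_congr fun z => ?_
  congr 1
  have : (((deriv f z) • (1 : ℂ →L[ℂ] ℂ)).restrictScalars ℝ : ℂ →L[ℝ] ℂ).det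
      = Complex.normSq (deriv f z) := by
    rw [ContinuousLinearMap.det]
    convert det_mul_map (deriv f z) using 2
    ext w; simp
  rw [this, _root_.abs_of_nonneg (Complex.normSq_nonneg _), Complex.sq_norm]
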